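/- arXiv:1507.00881 — 3 statements merged into one kernel-verified Lean document; each statement's English description precedes it below -/
import Mathlib

section
/- For every k ≥ 3, the strong metric dimension of the generalized Petersen graph GP(4k+1, 2) is at most 5k+5. -/
/-- A vertex `w` strongly resolves vertices `u` and `v` in graph `G`:
`u` lies on a shortest `v`–`w` path or `v` lies on a shortest `u`–`w` path,
equivalently via distances. -/
def StronglyResolves {V : Type*} (G : SimpleGraph V) (w u v : V) : Prop :=
  G.dist w u = G.dist w v + G.dist v u ∨ G.dist w v = G.dist w u + G.dist u v

/-- `S` is a strong resolving set of `G`. -/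
def IsStrongResolvingSet {V : Type*} (G : SimpleGraph V) (S : Set V) : Prop :=
  ∀ u v : V, u ≠ v → ∃ w ∈ S, StronglyResolves G w u v

/-- The strong metric dimension: minimum cardinality of a strong resolving set. -/
noncomputable def sdim {V : Type*} (G : SimpleGraph V) : ℕ :=
  sInf {m : ℕ | ∃ S : Set V, IsStrongResolvingSet G S ∧ S.ncard = m}

/-- Mutually maximally distant vertices. -/
def MutuallyMaximallyDistant {V : Type*} (G : SimpleGraph V) (u v : V) : Prop :=
  u ≠ v ∧ (∀ w : V, G.Adj u w → G.dist w v ≤ G.dist u v) ∧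
    (∀ w : V, G.Adj v w → G.dist u w ≤ G.dist u v)

/-- The generalized Petersen graph `GP n k`, with outer vertices `Sum.inl i` (the `uᵢ`)
and inner vertices `Sum.inr i` (the `vᵢ`), indices in `ZMod n`. -/
def GP (n k : ℕ) : SimpleGraph (ZMod n ⊕ ZMod n) where
  Adj x y := match x, y with
    | Sum.inl i, Sum.inl j => i ≠ j ∧ (j = i + 1 ∨ i = j + 1)
    | Sum.inl i, Sum.inr j => i = j
    | Sum.inr i, Sum.inl j => i = j
    | Sum.inr i, Sum.inr j => i ≠ j ∧ (j = i + (k : ZMod n) ∨ i = j + (k : ZMod n))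
  symm := ⟨by rintro (i|i) (j|j) h <;> simp_all <;> tauto⟩
  loopless := ⟨by rintro (i|i) h <;> simp_all⟩

set_option maxHeartbeats 1000000

open SimpleGraph

/-! ### General framework -/

section Framework
variable {V : Type*} {G : SimpleGraph V}

private lemma walk_bound (f : V → ℤ) (hf : ∀ a b : V, G.Adj a b → f b ≤ f a + 1) :
    ∀ {a b : V} (p : G.Walk a b), f b - f a ≤ p.length := by
  intro a b p
  induction p with
  | nil => simp
  | @cons a b c hadj q ih =>
    have h1 := hf a b hadj
    simp only [Walk.length_cons]
    push_cast
    omega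

/-- Lipschitz lower bound for graph distance. -/
lemma lipschitz_le_dist (f : V → ℤ) (hf : ∀ a b : V, G.Adj a b → f b ≤ f a + 1)
    {u v : V} (h : G.Reachable u v) : f v - f u ≤ G.dist u v := by
  obtain ⟨p, hp⟩ := h.exists_walk_length_eq_dist
  rw [← hp]
  exact walk_bound f hf p

/-- "v is maximally distant from u". -/
def MDist (G : SimpleGraph V) (u v : V) : Prop := ∀ x, G.Adj v x → G.dist u x ≤ G.dist u v

lemma exists_md_extension [Fintype V] (hc : G.Connected) (u v : V) :
    ∃ w : V, MDist G u w ∧ G.dist u w = G.dist u v + G.dist v w := by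
  classical
  set N := Finset.univ.sup (fun x => G.dist u x) with hN
  have hbd : ∀ x, G.dist u x ≤ N := fun x => Finset.le_sup (Finset.mem_univ x)
  suffices H : ∀ m : ℕ, ∀ v : V, N - G.dist u v ≤ m →
      ∃ w : V, MDist G u w ∧ G.dist u w = G.dist u v + G.dist v w by
    exact H N v (Nat.sub_le _ _)
  intro m
  induction m with
  | zero =>
    intro v hv
    have hvN : G.dist u v = N := le_antisymm (hbd v) (by omega)
    refine ⟨v, ?_, by simp⟩
    intro x hx
    rw [hvN]; exact hbd x
  | succ m ih =>
    intro v hv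
    by_cases hmd : MDist G u v
    · exact ⟨v, hmd, by simp⟩
    · simp only [MDist, not_forall] at hmd
      obtain ⟨x, hadj, hgt⟩ := hmd
      push_neg at hgt
      have hvx : G.dist v x = 1 := dist_eq_one_iff_adj.mpr hadj
      have h1 : G.dist u x ≤ G.dist u v + 1 := by
        have := hc.dist_triangle (u := u) (v := v) (w := x)
        omega
      have hx1 : G.dist u x = G.dist u v + 1 := by omega
      obtain ⟨w, hw, hwd⟩ := ih x (by omega)
      refine ⟨w, hw, ?_⟩
      have t1 : G.dist v w ≤ G.dist v x + G.dist x w := hc.dist_triangle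
      have t2 : G.dist u w ≤ G.dist u v + G.dist v w := hc.dist_triangle
      omega

/-- Extend `u` away from `v` keeping `v` maximally distant. -/
lemma exists_mmd_extension [Fintype V] (hc : G.Connected) (u v : V) (hv : MDist G u v) :
    ∃ w : V, MDist G w v ∧ MDist G v w ∧ G.dist w v = G.dist w u + G.dist u v := by
  classical
  set N := Finset.univ.sup (fun x => G.dist v x) with hN
  have hbd : ∀ x, G.dist v x ≤ N := fun x => Finset.le_sup (Finset.mem_univ x)
  suffices H : ∀ m : ℕ, ∀ u : V, MDist G u v → N - G.dist v u ≤ m →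
      ∃ w : V, MDist G w v ∧ MDist G v w ∧ G.dist w v = G.dist w u + G.dist u v by
    exact H N u hv (Nat.sub_le _ _)
  intro m
  induction m with
  | zero =>
    intro u hu hle
    have huN : G.dist v u = N := le_antisymm (hbd u) (by omega)
    refine ⟨u, hu, ?_, by rw [SimpleGraph.dist_self]; omega⟩
    intro x hx
    rw [huN]; exact hbd x
  | succ m ih =>
    intro u hu hle
    by_cases hmd : MDist G v u
    · exact ⟨u, hu, hmd, by rw [SimpleGraph.dist_self]; omega⟩
    · simp only [MDist, not_forall] at hmd
      obtain ⟨x, hadj, hgt⟩ := hmd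
      push_neg at hgt
      have hux : G.dist u x = 1 := dist_eq_one_iff_adj.mpr hadj
      have hvx1 : G.dist v x = G.dist v u + 1 := by
        have h2 := hc.dist_triangle (u := v) (v := u) (w := x)
        omega
      have hxv : MDist G x v := by
        intro y hy
        have h3 := hc.dist_triangle (u := x) (v := u) (w := y)
        have c1 : G.dist x u = G.dist u x := SimpleGraph.dist_comm ..
        have c2 : G.dist x v = G.dist v x := SimpleGraph.dist_comm ..
        have c3 : G.dist v u = G.dist u v := SimpleGraph.dist_comm ..
        have h4 := hu y hy
        omega
      obtain ⟨w, h1, h2, h3⟩ := ih x hxv (by omega)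
      refine ⟨w, h1, h2, ?_⟩
      have t1 : G.dist w v ≤ G.dist w u + G.dist u v := hc.dist_triangle
      have t2 : G.dist w u ≤ G.dist w x + G.dist x u := hc.dist_triangle
      have c1 : G.dist x u = G.dist u x := SimpleGraph.dist_comm ..
      have c2 : G.dist x v = G.dist v x := SimpleGraph.dist_comm ..
      have c3 : G.dist v u = G.dist u v := SimpleGraph.dist_comm ..
      omega

lemma cover_strong_resolving [Fintype V] (hc : G.Connected) (S : Set V)
    (hS : ∀ a b : V, MutuallyMaximallyDistant G a b → a ∈ S ∨ b ∈ S) :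
    IsStrongResolvingSet G S := by
  intro u v huv
  obtain ⟨b, hb1, hb2⟩ := exists_md_extension hc u v
  obtain ⟨a, ha1, ha2, ha3⟩ := exists_mmd_extension hc u b hb1
  have hab : G.dist a b = G.dist a u + G.dist u v + G.dist v b := by rw [ha3, hb2]; omega
  have hpos : 0 < G.dist u v := hc.pos_dist_of_ne huv
  have hmmd : MutuallyMaximallyDistant G a b := by
    refine ⟨?_, ?_, ?_⟩
    · intro h; subst h
      rw [SimpleGraph.dist_self] at hab; omega
    · intro x hx
      have := ha2 x hx
      have c1 : G.dist x b = G.dist b x := SimpleGraph.dist_comm ..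
      have c2 : G.dist a b = G.dist b a := SimpleGraph.dist_comm ..
      omega
    · intro x hx
      exact ha1 x hx
  rcases hS a b hmmd with h | h
  · refine ⟨a, h, Or.inr ?_⟩
    have t1 : G.dist a b ≤ G.dist a v + G.dist v b := hc.dist_triangle
    have t2 : G.dist a v ≤ G.dist a u + G.dist u v := hc.dist_triangle
    omega
  · refine ⟨b, h, Or.inl ?_⟩
    have c1 : G.dist b u = G.dist u b := SimpleGraph.dist_comm ..
    have c2 : G.dist b v = G.dist v b := SimpleGraph.dist_comm ..
    have c3 : G.dist v u = G.dist u v := SimpleGraph.dist_comm ..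
    omega

end Framework

/-! ### Isomorphisms and distance -/

section IsoDist
variable {V W : Type*} {G : SimpleGraph V} {G' : SimpleGraph W}

lemma iso_dist_le (φ : G ≃g G') {u v : V} (h : G.Reachable u v) :
    G'.dist (φ u) (φ v) ≤ G.dist u v := by
  obtain ⟨p, hp⟩ := h.exists_walk_length_eq_dist
  calc G'.dist (φ u) (φ v) ≤ (p.map φ.toHom).length := SimpleGraph.dist_le _
  _ = p.length := SimpleGraph.Walk.length_map _ _
  _ = G.dist u v := hp

lemma iso_dist_eq (φ : G ≃g G') (hc : G.Connected) (u v : V) :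
    G'.dist (φ u) (φ v) = G.dist u v := by
  refine le_antisymm (iso_dist_le φ (hc u v)) ?_
  have := iso_dist_le φ.symm (G := G') (u := φ u) (v := φ v) ?_
  · simpa using this
  · obtain ⟨p⟩ := hc u v
    exact ⟨p.map φ.toHom⟩

lemma mmd_of_iso {G : SimpleGraph V} (φ : G ≃g G) (hc : G.Connected) {a b : V}
    (h : MutuallyMaximallyDistant G a b) : MutuallyMaximallyDistant G (φ a) (φ b) := by
  obtain ⟨h1, h2, h3⟩ := h
  refine ⟨fun hh => h1 (φ.injective hh), ?_, ?_⟩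
  · intro w hw
    have hadj : G.Adj a (φ.symm w) := by
      have := φ.map_rel_iff (a := a) (b := φ.symm w)
      simp only [RelIso.apply_symm_apply] at this
      exact this.mp (by simpa using hw)
    have := h2 _ hadj
    calc G.dist w (φ b) = G.dist (φ (φ.symm w)) (φ b) := by simp
    _ = G.dist (φ.symm w) b := iso_dist_eq φ hc _ _
    _ ≤ G.dist a b := this
    _ = G.dist (φ a) (φ b) := (iso_dist_eq φ hc _ _).symm
  · intro w hw
    have hadj : G.Adj b (φ.symm w) := by
      have := φ.map_rel_iff (a := b) (b := φ.symm w)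
      simp only [RelIso.apply_symm_apply] at this
      exact this.mp (by simpa using hw)
    have := h3 _ hadj
    calc G.dist (φ a) w = G.dist (φ a) (φ (φ.symm w)) := by simp
    _ = G.dist a (φ.symm w) := iso_dist_eq φ hc _ _
    _ ≤ G.dist a b := this
    _ = G.dist (φ a) (φ b) := (iso_dist_eq φ hc _ _).symm

lemma mmd_symm {G : SimpleGraph V} {a b : V} (h : MutuallyMaximallyDistant G a b) :
    MutuallyMaximallyDistant G b a := by
  obtain ⟨h1, h2, h3⟩ := h
  have c : G.dist b a = G.dist a b := SimpleGraph.dist_comm ..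
  refine ⟨h1.symm, ?_, ?_⟩
  · intro w hw
    have := h3 w hw
    have c2 : G.dist w a = G.dist a w := SimpleGraph.dist_comm ..
    omega
  · intro w hw
    have := h2 w hw
    have c2 : G.dist b w = G.dist w b := SimpleGraph.dist_comm ..
    omega

end IsoDist

/-! ### GP basics -/

section GPBasic
variable {n : ℕ}

lemma GP_adj_ll {i j : ZMod n} :
    (GP n 2).Adj (Sum.inl i) (Sum.inl j) ↔ i ≠ j ∧ (j = i + 1 ∨ i = j + 1) := Iff.rfl
lemma GP_adj_lr {i j : ZMod n} : (GP n 2).Adj (Sum.inl i) (Sum.inr j) ↔ i = j := Iff.rfl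
lemma GP_adj_rl {i j : ZMod n} : (GP n 2).Adj (Sum.inr i) (Sum.inl j) ↔ i = j := Iff.rfl
lemma GP_adj_rr {i j : ZMod n} :
    (GP n 2).Adj (Sum.inr i) (Sum.inr j) ↔ i ≠ j ∧ (j = i + 2 ∨ i = j + 2) := by
  have h2 : ((2 : ℕ) : ZMod n) = (2 : ZMod n) := by push_cast; ring
  show (i ≠ j ∧ (j = i + ((2:ℕ) : ZMod n) ∨ i = j + ((2:ℕ) : ZMod n))) ↔ _
  rw [h2]

/-- rotation isomorphism -/
def gpRot (r : ZMod n) : GP n 2 ≃g GP n 2 where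
  toEquiv := Equiv.sumCongr (Equiv.addRight r) (Equiv.addRight r)
  map_rel_iff' := by
    rintro (i|i) (j|j) <;>
      simp only [Equiv.sumCongr_apply, Equiv.coe_addRight, Sum.map_inl, Sum.map_inr] <;>
      show _ ↔ ((GP n 2).Adj _ _)
    · rw [GP_adj_ll, GP_adj_ll, add_right_comm i r 1, add_right_comm j r 1]
      simp [add_left_inj, ne_eq]
    · rw [GP_adj_lr, GP_adj_lr]; exact add_left_inj r
    · rw [GP_adj_rl, GP_adj_rl]; exact add_left_inj r
    · rw [GP_adj_rr, GP_adj_rr, add_right_comm i r 2, add_right_comm j r 2]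
      simp [add_left_inj, ne_eq]

/-- reflection isomorphism -/
def gpRefl : GP n 2 ≃g GP n 2 where
  toEquiv := Equiv.sumCongr (Equiv.neg _) (Equiv.neg _)
  map_rel_iff' := by
    rintro (i|i) (j|j) <;>
      simp only [Equiv.sumCongr_apply, Equiv.neg_apply, Sum.map_inl, Sum.map_inr] <;>
      show _ ↔ ((GP n 2).Adj _ _)
    · rw [GP_adj_ll, GP_adj_ll]
      constructor
      · rintro ⟨h1, h2 | h2⟩
        · exact ⟨fun hh => h1 (by rw [hh]), Or.inr (by linear_combination h2)⟩
        · exact ⟨fun hh => h1 (by rw [hh]), Or.inl (by linear_combination h2)⟩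
      · rintro ⟨h1, h2 | h2⟩
        · exact ⟨fun hh => h1 (by simpa using congrArg Neg.neg hh), Or.inr (by linear_combination h2)⟩
        · exact ⟨fun hh => h1 (by simpa using congrArg Neg.neg hh), Or.inl (by linear_combination h2)⟩
    · rw [GP_adj_lr, GP_adj_lr, neg_inj]
    · rw [GP_adj_rl, GP_adj_rl, neg_inj]
    · rw [GP_adj_rr, GP_adj_rr]
      constructor
      · rintro ⟨h1, h2 | h2⟩
        · exact ⟨fun hh => h1 (by rw [hh]), Or.inr (by linear_combination h2)⟩
        · exact ⟨fun hh => h1 (by rw [hh]), Or.inl (by linear_combination h2)⟩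
      · rintro ⟨h1, h2 | h2⟩
        · exact ⟨fun hh => h1 (by simpa using congrArg Neg.neg hh), Or.inr (by linear_combination h2)⟩
        · exact ⟨fun hh => h1 (by simpa using congrArg Neg.neg hh), Or.inl (by linear_combination h2)⟩

end GPBasic

/-! ### Connectivity -/

section Conn
variable {n : ℕ} (hn : 13 ≤ n)
include hn

lemma gp_adj_outer (a : ZMod n) : (GP n 2).Adj (Sum.inl a) (Sum.inl (a+1)) := by
  haveI : Fact (1 < n) := ⟨by omega⟩
  rw [GP_adj_ll]
  refine ⟨fun h => ?_, Or.inl rfl⟩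
  have : (1 : ZMod n) = 0 := by
    have := congrArg (· - a) h
    simpa using this.symm
  exact one_ne_zero this

lemma gp_adj_inner (a : ZMod n) : (GP n 2).Adj (Sum.inr a) (Sum.inr (a+2)) := by
  haveI : Fact (1 < n) := ⟨by omega⟩
  rw [GP_adj_rr]
  refine ⟨fun h => ?_, Or.inl rfl⟩
  have h2 : (2 : ZMod n) = 0 := by
    have := congrArg (· - a) h
    simpa using this.symm
  have h3 : ((2:ℕ) : ZMod n) = 0 := by push_cast; exact h2
  have hv := ZMod.val_cast_of_lt (show (2:ℕ) < n by omega)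
  rw [h3] at hv
  simp at hv

omit hn in
lemma gp_adj_spoke (a : ZMod n) : (GP n 2).Adj (Sum.inl a) (Sum.inr a) := GP_adj_lr.mpr rfl

lemma gp_connected : (GP n 2).Connected := by
  haveI : NeZero n := ⟨by omega⟩
  rw [connected_iff]
  constructor
  · have key : ∀ m : ℕ, (GP n 2).Reachable (Sum.inl 0) (Sum.inl (m : ZMod n)) := by
      intro m
      induction m with
      | zero => rw [Nat.cast_zero]
      | succ m ih =>
        refine ih.trans (Adj.reachable ?_)
        have : ((m+1 : ℕ) : ZMod n) = (m : ZMod n) + 1 := by push_cast; ring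
        rw [this]
        exact gp_adj_outer hn _
    have keyl : ∀ i : ZMod n, (GP n 2).Reachable (Sum.inl 0) (Sum.inl i) := by
      intro i
      have := key i.val
      rwa [ZMod.natCast_val, ZMod.cast_id] at this
    intro x y
    have hx : ∀ z : ZMod n ⊕ ZMod n, (GP n 2).Reachable (Sum.inl 0) z := by
      rintro (i|i)
      · exact keyl i
      · exact (keyl i).trans (Adj.reachable (gp_adj_spoke i))
    exact (hx x).symm.trans (hx y)
  · exact ⟨Sum.inl 0⟩
end Conn

/-! ### distance formulas -/

def dUu (n j : ℕ) : ℕ := min (min j ((j+1)/2+2)) (min (n-j) ((n-j+1)/2+2))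
def dUv (n j : ℕ) : ℕ := min (j/2+1+j%2) ((n-j)/2+1+(n-j)%2)
def dVv (n j : ℕ) : ℕ := min (j/2+3*(j%2)) ((n-j)/2+3*((n-j)%2))

lemma mod_cases1 (N j : ℕ) (h1 : j < N) :
    (j+1 < N ∧ (j+1) % N = j+1) ∨ (j+1 = N ∧ (j+1) % N = 0) := by
  rcases Nat.lt_or_ge (j+1) N with h | h
  · left; exact ⟨h, Nat.mod_eq_of_lt h⟩
  · right
    have he : j + 1 = N := by omega
    exact ⟨he, by rw [he, Nat.mod_self]⟩

lemma mod_cases2 (N j : ℕ) (h1 : j < N) (h2 : 3 ≤ N) :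
    (j+2 < N ∧ (j+2) % N = j+2) ∨ (j+2 = N ∧ (j+2) % N = 0) ∨ (j+2 = N+1 ∧ (j+2) % N = 1) := by
  rcases Nat.lt_or_ge (j+2) N with h | h
  · left; exact ⟨h, Nat.mod_eq_of_lt h⟩
  · rcases Nat.lt_or_ge j (N-1) with h3 | h3
    · right; left
      have he : j + 2 = N := by omega
      exact ⟨he, by rw [he, Nat.mod_self]⟩
    · right; right
      have he : j + 2 = N + 1 := by omega
      refine ⟨he, ?_⟩
      rw [he, Nat.add_mod, Nat.mod_self]
      simp [Nat.mod_eq_of_lt (by omega : 1 < N)]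

lemma lipUu1 (k j : ℕ) (hk : 3 ≤ k) (hj : j < 4*k+1) :
    dUu (4*k+1) ((j+1) % (4*k+1)) ≤ dUu (4*k+1) j + 1 ∧
    dUu (4*k+1) j ≤ dUu (4*k+1) ((j+1) % (4*k+1)) + 1 := by
  rcases mod_cases1 (4*k+1) j hj with ⟨h1, h⟩ | ⟨h1, h⟩ <;> rw [h] <;> unfold dUu <;>
    (rcases Nat.even_or_odd j with ⟨t, ht⟩ | ⟨t, ht⟩ <;> subst ht <;> omega)

lemma lipUuUv (k j : ℕ) (hk : 3 ≤ k) (hj : j < 4*k+1) :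
    dUv (4*k+1) j ≤ dUu (4*k+1) j + 1 ∧ dUu (4*k+1) j ≤ dUv (4*k+1) j + 1 := by
  unfold dUu dUv
  rcases Nat.even_or_odd j with ⟨t, ht⟩ | ⟨t, ht⟩ <;> subst ht <;> omega

lemma lipUv1 (k j : ℕ) (hk : 3 ≤ k) (hj : j < 4*k+1) :
    dUv (4*k+1) ((j+1) % (4*k+1)) ≤ dUv (4*k+1) j + 1 ∧
    dUv (4*k+1) j ≤ dUv (4*k+1) ((j+1) % (4*k+1)) + 1 := by
  rcases mod_cases1 (4*k+1) j hj with ⟨h1, h⟩ | ⟨h1, h⟩ <;> rw [h] <;> unfold dUv <;>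
    (rcases Nat.even_or_odd j with ⟨t, ht⟩ | ⟨t, ht⟩ <;> subst ht <;> omega)

lemma lipUv2 (k j : ℕ) (hk : 3 ≤ k) (hj : j < 4*k+1) :
    dUv (4*k+1) ((j+2) % (4*k+1)) ≤ dUv (4*k+1) j + 1 ∧
    dUv (4*k+1) j ≤ dUv (4*k+1) ((j+2) % (4*k+1)) + 1 := by
  rcases mod_cases2 (4*k+1) j hj (by omega) with ⟨h1, h⟩ | ⟨h1, h⟩ | ⟨h1, h⟩ <;> rw [h] <;>
    unfold dUv <;> (rcases Nat.even_or_odd j with ⟨t, ht⟩ | ⟨t, ht⟩ <;> subst ht <;> omega)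

lemma lipUvVv (k j : ℕ) (hk : 3 ≤ k) (hj : j < 4*k+1) :
    dVv (4*k+1) j ≤ dUv (4*k+1) j + 1 ∧ dUv (4*k+1) j ≤ dVv (4*k+1) j + 1 := by
  unfold dUv dVv
  rcases Nat.even_or_odd j with ⟨t, ht⟩ | ⟨t, ht⟩ <;> subst ht <;> omega

lemma lipVv2 (k j : ℕ) (hk : 3 ≤ k) (hj : j < 4*k+1) :
    dVv (4*k+1) ((j+2) % (4*k+1)) ≤ dVv (4*k+1) j + 1 ∧
    dVv (4*k+1) j ≤ dVv (4*k+1) ((j+2) % (4*k+1)) + 1 := by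
  rcases mod_cases2 (4*k+1) j hj (by omega) with ⟨h1, h⟩ | ⟨h1, h⟩ | ⟨h1, h⟩ <;> rw [h] <;>
    unfold dVv <;> (rcases Nat.even_or_odd j with ⟨t, ht⟩ | ⟨t, ht⟩ <;> subst ht <;> omega)

section LowerBounds
variable {k : ℕ} (hk : 3 ≤ k)
include hk

/-- conjectured distance-from-`u₀` function -/
def fU (k : ℕ) : (ZMod (4*k+1) ⊕ ZMod (4*k+1)) → ℤ :=
  Sum.elim (fun i => (dUu (4*k+1) i.val : ℤ)) (fun i => (dUv (4*k+1) i.val : ℤ))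

/-- conjectured distance-from-`v₀` function -/
def fV (k : ℕ) : (ZMod (4*k+1) ⊕ ZMod (4*k+1)) → ℤ :=
  Sum.elim (fun i => (dUv (4*k+1) i.val : ℤ)) (fun i => (dVv (4*k+1) i.val : ℤ))

lemma val_add_one (i : ZMod (4*k+1)) : (i + 1).val = (i.val + 1) % (4*k+1) := by
  haveI : NeZero (4*k+1) := ⟨by omega⟩
  haveI : Fact (1 < 4*k+1) := ⟨by omega⟩
  rw [ZMod.val_add, ZMod.val_one]

lemma val_add_two (i : ZMod (4*k+1)) : (i + 2).val = (i.val + 2) % (4*k+1) := by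
  haveI : NeZero (4*k+1) := ⟨by omega⟩
  have h2 : ((2:ℕ) : ZMod (4*k+1)) = (2 : ZMod (4*k+1)) := by push_cast; ring
  rw [← h2, ZMod.val_add, ZMod.val_cast_of_lt (by omega : (2:ℕ) < 4*k+1)]

lemma fU_lip : ∀ a b, (GP (4*k+1) 2).Adj a b → fU k b ≤ fU k a + 1 := by
  haveI : NeZero (4*k+1) := ⟨by omega⟩
  rintro (i|i) (j|j) hadj
  · rw [GP_adj_ll] at hadj
    obtain ⟨hne, h | h⟩ := hadj <;> subst h <;> simp only [fU, Sum.elim_inl, Sum.elim_inr]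
    · have := (lipUu1 k i.val hk (ZMod.val_lt i)).1
      rw [val_add_one hk i]
      exact_mod_cast by exact_mod_cast this
    · have := (lipUu1 k j.val hk (ZMod.val_lt j)).2
      rw [val_add_one hk j]
      exact_mod_cast this
  · rw [GP_adj_lr] at hadj; subst hadj
    simp only [fU, Sum.elim_inl, Sum.elim_inr]
    exact_mod_cast (lipUuUv k i.val hk (ZMod.val_lt i)).1
  · rw [GP_adj_rl] at hadj; subst hadj
    simp only [fU, Sum.elim_inl, Sum.elim_inr]
    exact_mod_cast (lipUuUv k i.val hk (ZMod.val_lt i)).2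
  · rw [GP_adj_rr] at hadj
    obtain ⟨hne, h | h⟩ := hadj <;> subst h <;> simp only [fU, Sum.elim_inl, Sum.elim_inr]
    · have := (lipUv2 k i.val hk (ZMod.val_lt i)).1
      rw [val_add_two hk i]
      exact_mod_cast this
    · have := (lipUv2 k j.val hk (ZMod.val_lt j)).2
      rw [val_add_two hk j]
      exact_mod_cast this

lemma fV_lip : ∀ a b, (GP (4*k+1) 2).Adj a b → fV k b ≤ fV k a + 1 := by
  haveI : NeZero (4*k+1) := ⟨by omega⟩
  rintro (i|i) (j|j) hadj
  · rw [GP_adj_ll] at hadj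
    obtain ⟨hne, h | h⟩ := hadj <;> subst h <;> simp only [fV, Sum.elim_inl, Sum.elim_inr]
    · have := (lipUv1 k i.val hk (ZMod.val_lt i)).1
      rw [val_add_one hk i]
      exact_mod_cast this
    · have := (lipUv1 k j.val hk (ZMod.val_lt j)).2
      rw [val_add_one hk j]
      exact_mod_cast this
  · rw [GP_adj_lr] at hadj; subst hadj
    simp only [fV, Sum.elim_inl, Sum.elim_inr]
    exact_mod_cast (lipUvVv k i.val hk (ZMod.val_lt i)).1
  · rw [GP_adj_rl] at hadj; subst hadj
    simp only [fV, Sum.elim_inl, Sum.elim_inr]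
    exact_mod_cast (lipUvVv k i.val hk (ZMod.val_lt i)).2
  · rw [GP_adj_rr] at hadj
    obtain ⟨hne, h | h⟩ := hadj <;> subst h <;> simp only [fV, Sum.elim_inl, Sum.elim_inr]
    · have := (lipVv2 k i.val hk (ZMod.val_lt i)).1
      rw [val_add_two hk i]
      exact_mod_cast this
    · have := (lipVv2 k j.val hk (ZMod.val_lt j)).2
      rw [val_add_two hk j]
      exact_mod_cast this

lemma distU_u (i : ZMod (4*k+1)) :
    dUu (4*k+1) i.val ≤ (GP (4*k+1) 2).dist (Sum.inl 0) (Sum.inl i) := by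
  haveI : NeZero (4*k+1) := ⟨by omega⟩
  have := lipschitz_le_dist (fU k) (fU_lip hk)
    ((gp_connected (by omega)) (Sum.inl 0) (Sum.inl i))
  have h0 : fU k (Sum.inl (0 : ZMod (4*k+1))) = 0 := by
    simp only [fU, Sum.elim_inl, Sum.elim_inr]
    rw [ZMod.val_zero]
    unfold dUu
    simp
  rw [h0] at this
  simp only [fU, Sum.elim_inl, Sum.elim_inr] at this
  omega

lemma distU_v (i : ZMod (4*k+1)) :
    dUv (4*k+1) i.val ≤ (GP (4*k+1) 2).dist (Sum.inl 0) (Sum.inr i) := by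
  haveI : NeZero (4*k+1) := ⟨by omega⟩
  have := lipschitz_le_dist (fU k) (fU_lip hk)
    ((gp_connected (by omega)) (Sum.inl 0) (Sum.inr i))
  have h0 : fU k (Sum.inl (0 : ZMod (4*k+1))) = 0 := by
    simp only [fU, Sum.elim_inl, Sum.elim_inr]
    rw [ZMod.val_zero]
    unfold dUu
    simp
  rw [h0] at this
  simp only [fU, Sum.elim_inl, Sum.elim_inr] at this
  omega

lemma distV_v (i : ZMod (4*k+1)) :
    dVv (4*k+1) i.val ≤ (GP (4*k+1) 2).dist (Sum.inr 0) (Sum.inr i) := by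
  haveI : NeZero (4*k+1) := ⟨by omega⟩
  have := lipschitz_le_dist (fV k) (fV_lip hk)
    ((gp_connected (by omega)) (Sum.inr 0) (Sum.inr i))
  have h0 : fV k (Sum.inr (0 : ZMod (4*k+1))) = 0 := by
    simp only [fV, Sum.elim_inl, Sum.elim_inr]
    rw [ZMod.val_zero]
    unfold dVv
    simp
  rw [h0] at this
  simp only [fV, Sum.elim_inl, Sum.elim_inr] at this
  omega

end LowerBounds

-- appended to part7 context manually
section UpperBounds
variable {k : ℕ} (hk : 3 ≤ k)
include hk

lemma dist_le_outer (a : ZMod (4*k+1)) (t : ℕ) :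
    (GP (4*k+1) 2).dist (Sum.inl a) (Sum.inl (a + (t : ℕ))) ≤ t := by
  have hc := gp_connected (n := 4*k+1) (by omega)
  induction t with
  | zero => simp
  | succ t ih =>
    have he : a + ((t+1 : ℕ) : ZMod (4*k+1)) = (a + (t:ℕ)) + 1 := by push_cast; ring
    rw [he]
    calc (GP (4*k+1) 2).dist (Sum.inl a) (Sum.inl ((a + (t:ℕ)) + 1))
        ≤ (GP (4*k+1) 2).dist (Sum.inl a) (Sum.inl (a + (t:ℕ)))
          + (GP (4*k+1) 2).dist (Sum.inl (a + (t:ℕ))) (Sum.inl ((a + (t:ℕ)) + 1)) :=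
          hc.dist_triangle
    _ ≤ t + 1 := by
        have h1 : (GP (4*k+1) 2).dist (Sum.inl (a + (t:ℕ))) (Sum.inl ((a + (t:ℕ)) + 1)) = 1 :=
          dist_eq_one_iff_adj.mpr (gp_adj_outer (by omega) _)
        omega

lemma dist_le_inner (a : ZMod (4*k+1)) (t : ℕ) :
    (GP (4*k+1) 2).dist (Sum.inr a) (Sum.inr (a + (2*t : ℕ))) ≤ t := by
  have hc := gp_connected (n := 4*k+1) (by omega)
  induction t with
  | zero => simp
  | succ t ih =>
    have he : a + ((2*(t+1) : ℕ) : ZMod (4*k+1)) = (a + (2*t:ℕ)) + 2 := by push_cast; ring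
    rw [he]
    calc (GP (4*k+1) 2).dist (Sum.inr a) (Sum.inr ((a + (2*t:ℕ)) + 2))
        ≤ (GP (4*k+1) 2).dist (Sum.inr a) (Sum.inr (a + (2*t:ℕ)))
          + (GP (4*k+1) 2).dist (Sum.inr (a + (2*t:ℕ))) (Sum.inr ((a + (2*t:ℕ)) + 2)) :=
          hc.dist_triangle
    _ ≤ t + 1 := by
        have h1 : (GP (4*k+1) 2).dist (Sum.inr (a + (2*t:ℕ))) (Sum.inr ((a + (2*t:ℕ)) + 2)) = 1 :=
          dist_eq_one_iff_adj.mpr (gp_adj_inner (by omega) _)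
        omega

lemma dist_spoke (a : ZMod (4*k+1)) :
    (GP (4*k+1) 2).dist (Sum.inl a) (Sum.inr a) = 1 :=
  dist_eq_one_iff_adj.mpr (gp_adj_spoke a)

-- upper bounds from u_0 and v_0
lemma ub_uu_outer (t : ℕ) :
    (GP (4*k+1) 2).dist (Sum.inl 0) (Sum.inl ((2*t : ℕ) : ZMod (4*k+1))) ≤ 2*t := by
  have := dist_le_outer hk 0 (2*t)
  simpa using this

lemma ub_uu_inner (t : ℕ) :
    (GP (4*k+1) 2).dist (Sum.inl 0) (Sum.inl ((2*t : ℕ) : ZMod (4*k+1))) ≤ t + 2 := by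
  have hc := gp_connected (n := 4*k+1) (by omega)
  have h1 := dist_spoke hk (0 : ZMod (4*k+1))
  have h2 := dist_le_inner hk 0 t
  have h3 := dist_spoke hk (((2*t : ℕ) : ZMod (4*k+1)))
  have t1 : (GP (4*k+1) 2).dist (Sum.inl 0) (Sum.inl ((2*t : ℕ) : ZMod (4*k+1)))
      ≤ (GP (4*k+1) 2).dist (Sum.inl 0) (Sum.inr ((2*t : ℕ) : ZMod (4*k+1)))
        + (GP (4*k+1) 2).dist (Sum.inr ((2*t : ℕ) : ZMod (4*k+1))) (Sum.inl ((2*t : ℕ) : ZMod (4*k+1))) :=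
    hc.dist_triangle
  have t2 : (GP (4*k+1) 2).dist (Sum.inl 0) (Sum.inr ((2*t : ℕ) : ZMod (4*k+1)))
      ≤ (GP (4*k+1) 2).dist (Sum.inl 0) (Sum.inr 0)
        + (GP (4*k+1) 2).dist (Sum.inr 0) (Sum.inr ((2*t : ℕ) : ZMod (4*k+1))) :=
    hc.dist_triangle
  have h2' : (GP (4*k+1) 2).dist (Sum.inr 0) (Sum.inr ((2*t : ℕ) : ZMod (4*k+1))) ≤ t := by
    simpa using h2
  have h3' : (GP (4*k+1) 2).dist (Sum.inr ((2*t : ℕ) : ZMod (4*k+1))) (Sum.inl ((2*t : ℕ) : ZMod (4*k+1))) = 1 := by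
    rw [SimpleGraph.dist_comm]; exact h3
  omega

lemma ub_uv_even (t : ℕ) :
    (GP (4*k+1) 2).dist (Sum.inl 0) (Sum.inr ((2*t : ℕ) : ZMod (4*k+1))) ≤ t + 1 := by
  have hc := gp_connected (n := 4*k+1) (by omega)
  have h1 := dist_spoke hk (0 : ZMod (4*k+1))
  have h2 : (GP (4*k+1) 2).dist (Sum.inr 0) (Sum.inr ((2*t : ℕ) : ZMod (4*k+1))) ≤ t := by
    simpa using dist_le_inner hk 0 t
  have t2 : (GP (4*k+1) 2).dist (Sum.inl 0) (Sum.inr ((2*t : ℕ) : ZMod (4*k+1)))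
      ≤ (GP (4*k+1) 2).dist (Sum.inl 0) (Sum.inr 0)
        + (GP (4*k+1) 2).dist (Sum.inr 0) (Sum.inr ((2*t : ℕ) : ZMod (4*k+1))) :=
    hc.dist_triangle
  omega

lemma ub_uv_odd (t : ℕ) :
    (GP (4*k+1) 2).dist (Sum.inl 0) (Sum.inr ((2*t+1 : ℕ) : ZMod (4*k+1))) ≤ t + 2 := by
  have hc := gp_connected (n := 4*k+1) (by omega)
  have h1 : (GP (4*k+1) 2).dist (Sum.inl (0:ZMod (4*k+1))) (Sum.inl 1) = 1 := by
    have := dist_eq_one_iff_adj.mpr (gp_adj_outer (n := 4*k+1) (by omega) 0)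
    simpa using this
  have h2 := dist_spoke hk (1 : ZMod (4*k+1))
  have h3 : (GP (4*k+1) 2).dist (Sum.inr 1) (Sum.inr ((2*t+1 : ℕ) : ZMod (4*k+1))) ≤ t := by
    have := dist_le_inner hk 1 t
    have he : (1 : ZMod (4*k+1)) + ((2*t : ℕ) : ZMod (4*k+1)) = ((2*t+1 : ℕ) : ZMod (4*k+1)) := by
      push_cast; ring
    rwa [he] at this
  have t1 : (GP (4*k+1) 2).dist (Sum.inl 0) (Sum.inr ((2*t+1 : ℕ) : ZMod (4*k+1)))
      ≤ (GP (4*k+1) 2).dist (Sum.inl 0) (Sum.inl 1)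
        + (GP (4*k+1) 2).dist (Sum.inl 1) (Sum.inr 1)
        + (GP (4*k+1) 2).dist (Sum.inr 1) (Sum.inr ((2*t+1 : ℕ) : ZMod (4*k+1))) := by
    have a1 : (GP (4*k+1) 2).dist (Sum.inl 0) (Sum.inr ((2*t+1 : ℕ) : ZMod (4*k+1)))
        ≤ (GP (4*k+1) 2).dist (Sum.inl 0) (Sum.inr 1)
          + (GP (4*k+1) 2).dist (Sum.inr 1) (Sum.inr ((2*t+1 : ℕ) : ZMod (4*k+1))) := hc.dist_triangle
    have a2 : (GP (4*k+1) 2).dist (Sum.inl 0) (Sum.inr 1)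
        ≤ (GP (4*k+1) 2).dist (Sum.inl 0) (Sum.inl 1)
          + (GP (4*k+1) 2).dist (Sum.inl 1) (Sum.inr 1) := hc.dist_triangle
    omega
  omega

lemma ub_vv_even (t : ℕ) :
    (GP (4*k+1) 2).dist (Sum.inr 0) (Sum.inr ((2*t : ℕ) : ZMod (4*k+1))) ≤ t := by
  simpa using dist_le_inner hk 0 t

lemma ub_vv_odd (t : ℕ) :
    (GP (4*k+1) 2).dist (Sum.inr 0) (Sum.inr ((2*t+1 : ℕ) : ZMod (4*k+1))) ≤ t + 3 := by
  have hc := gp_connected (n := 4*k+1) (by omega)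
  have h0 : (GP (4*k+1) 2).dist (Sum.inr (0:ZMod (4*k+1))) (Sum.inl 0) = 1 := by
    rw [SimpleGraph.dist_comm]; exact dist_spoke hk 0
  have h1 := ub_uv_odd hk t
  have t1 : (GP (4*k+1) 2).dist (Sum.inr 0) (Sum.inr ((2*t+1 : ℕ) : ZMod (4*k+1)))
      ≤ (GP (4*k+1) 2).dist (Sum.inr 0) (Sum.inl 0)
        + (GP (4*k+1) 2).dist (Sum.inl 0) (Sum.inr ((2*t+1 : ℕ) : ZMod (4*k+1))) := hc.dist_triangle
  omega

end UpperBounds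

section NotMMD
variable {k : ℕ} (hk : 3 ≤ k)
include hk

lemma notMMD_uu {t : ℕ} (h1 : 1 ≤ t) (h2 : t ≤ k-1) :
    ¬ MutuallyMaximallyDistant (GP (4*k+1) 2) (Sum.inl 0) (Sum.inl ((2*t : ℕ) : ZMod (4*k+1))) := by
  intro hm
  have hadj : (GP (4*k+1) 2).Adj (Sum.inl ((2*t : ℕ) : ZMod (4*k+1)))
      (Sum.inl ((2*t+1 : ℕ) : ZMod (4*k+1))) := by
    have he : ((2*t+1 : ℕ) : ZMod (4*k+1)) = ((2*t : ℕ) : ZMod (4*k+1)) + 1 := by push_cast; ring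
    rw [he]
    exact gp_adj_outer (by omega) _
  have hle := hm.2.2 _ hadj
  have hlow := distU_u hk (((2*t+1 : ℕ) : ZMod (4*k+1)))
  rw [ZMod.val_cast_of_lt (by omega : 2*t+1 < 4*k+1)] at hlow
  have hup1 := ub_uu_outer hk t
  have hup2 := ub_uu_inner hk t
  unfold dUu at hlow
  omega

lemma notMMD_vv_even {t : ℕ} (h1 : 1 ≤ t) (h2 : t ≤ k-2) :
    ¬ MutuallyMaximallyDistant (GP (4*k+1) 2) (Sum.inr 0) (Sum.inr ((2*t : ℕ) : ZMod (4*k+1))) := by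
  intro hm
  have hadj : (GP (4*k+1) 2).Adj (Sum.inr ((2*t : ℕ) : ZMod (4*k+1)))
      (Sum.inr ((2*t+2 : ℕ) : ZMod (4*k+1))) := by
    have he : ((2*t+2 : ℕ) : ZMod (4*k+1)) = ((2*t : ℕ) : ZMod (4*k+1)) + 2 := by push_cast; ring
    rw [he]
    exact gp_adj_inner (by omega) _
  have hle := hm.2.2 _ hadj
  have hlow := distV_v hk (((2*t+2 : ℕ) : ZMod (4*k+1)))
  rw [ZMod.val_cast_of_lt (by omega : 2*t+2 < 4*k+1)] at hlow
  have hup := ub_vv_even hk t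
  unfold dVv at hlow
  omega

lemma notMMD_vv_odd {t : ℕ} (h2 : t ≤ k-3) :
    ¬ MutuallyMaximallyDistant (GP (4*k+1) 2) (Sum.inr 0) (Sum.inr ((2*t+1 : ℕ) : ZMod (4*k+1))) := by
  intro hm
  have hadj : (GP (4*k+1) 2).Adj (Sum.inr ((2*t+1 : ℕ) : ZMod (4*k+1)))
      (Sum.inr ((2*t+3 : ℕ) : ZMod (4*k+1))) := by
    have he : ((2*t+3 : ℕ) : ZMod (4*k+1)) = ((2*t+1 : ℕ) : ZMod (4*k+1)) + 2 := by push_cast; ring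
    rw [he]
    exact gp_adj_inner (by omega) _
  have hle := hm.2.2 _ hadj
  have hlow := distV_v hk (((2*t+3 : ℕ) : ZMod (4*k+1)))
  rw [ZMod.val_cast_of_lt (by omega : 2*t+3 < 4*k+1)] at hlow
  have hup := ub_vv_odd hk t
  unfold dVv at hlow
  omega

lemma notMMD_uv_even {t : ℕ} (h2 : t ≤ k-1) :
    ¬ MutuallyMaximallyDistant (GP (4*k+1) 2) (Sum.inl 0) (Sum.inr ((2*t : ℕ) : ZMod (4*k+1))) := by
  intro hm
  have hadj : (GP (4*k+1) 2).Adj (Sum.inr ((2*t : ℕ) : ZMod (4*k+1)))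
      (Sum.inr ((2*t+2 : ℕ) : ZMod (4*k+1))) := by
    have he : ((2*t+2 : ℕ) : ZMod (4*k+1)) = ((2*t : ℕ) : ZMod (4*k+1)) + 2 := by push_cast; ring
    rw [he]
    exact gp_adj_inner (by omega) _
  have hle := hm.2.2 _ hadj
  have hlow := distU_v hk (((2*t+2 : ℕ) : ZMod (4*k+1)))
  rw [ZMod.val_cast_of_lt (by omega : 2*t+2 < 4*k+1)] at hlow
  have hup := ub_uv_even hk t
  unfold dUv at hlow
  omega

lemma notMMD_uv_odd {t : ℕ} (h2 : t ≤ k-2) :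
    ¬ MutuallyMaximallyDistant (GP (4*k+1) 2) (Sum.inl 0) (Sum.inr ((2*t+1 : ℕ) : ZMod (4*k+1))) := by
  intro hm
  have hadj : (GP (4*k+1) 2).Adj (Sum.inr ((2*t+1 : ℕ) : ZMod (4*k+1)))
      (Sum.inr ((2*t+3 : ℕ) : ZMod (4*k+1))) := by
    have he : ((2*t+3 : ℕ) : ZMod (4*k+1)) = ((2*t+1 : ℕ) : ZMod (4*k+1)) + 2 := by push_cast; ring
    rw [he]
    exact gp_adj_inner (by omega) _
  have hle := hm.2.2 _ hadj
  have hlow := distU_v hk (((2*t+3 : ℕ) : ZMod (4*k+1)))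
  rw [ZMod.val_cast_of_lt (by omega : 2*t+3 < 4*k+1)] at hlow
  have hup := ub_uv_odd hk t
  unfold dUv at hlow
  omega

end NotMMD

section Assemble
variable {k : ℕ} (hk : 3 ≤ k)

@[simp] lemma gpRot_inl (r x : ZMod (4*k+1)) : (gpRot r) (Sum.inl x) = Sum.inl (x + r) := rfl
@[simp] lemma gpRot_inr (r x : ZMod (4*k+1)) : (gpRot r) (Sum.inr x) = Sum.inr (x + r) := rfl
@[simp] lemma gpRefl_inl (x : ZMod (4*k+1)) :
    (gpRefl (n := 4*k+1)) (Sum.inl x) = Sum.inl (-x) := rfl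
@[simp] lemma gpRefl_inr (x : ZMod (4*k+1)) :
    (gpRefl (n := 4*k+1)) (Sum.inr x) = Sum.inr (-x) := rfl

include hk

lemma cast_sub_eq (a b : ℕ) (hba : b ≤ a) :
    ((a : ℕ) : ZMod (4*k+1)) + -((b : ℕ) : ZMod (4*k+1)) = (((a - b : ℕ)) : ZMod (4*k+1)) := by
  have := Nat.cast_sub (R := ZMod (4*k+1)) hba
  rw [this]; ring

lemma notMMD_uu_pair {i j : ZMod (4*k+1)} (ai aj : ℕ) (h1 : ai < aj) (h2 : aj ≤ k-1)
    (hi : i = ((2*ai : ℕ) : ZMod (4*k+1))) (hj : j = ((2*aj : ℕ) : ZMod (4*k+1))) :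
    ¬ MutuallyMaximallyDistant (GP (4*k+1) 2) (Sum.inl i) (Sum.inl j) := by
  intro hm
  have hc := gp_connected (n := 4*k+1) (by omega)
  have hm2 := mmd_of_iso (gpRot (-i)) hc hm
  simp only [gpRot_inl] at hm2
  rw [add_neg_cancel] at hm2
  have he : j + -i = ((2*(aj - ai) : ℕ) : ZMod (4*k+1)) := by
    rw [hi, hj, cast_sub_eq hk (2*aj) (2*ai) (by omega)]
    congr 1
    omega
  rw [he] at hm2
  exact notMMD_uu hk (by omega) (by omega) hm2

lemma notMMD_vv_pair {i j : ZMod (4*k+1)} (bi bj : ℕ) (h1 : bi < bj) (h2 : bj ≤ 2*k-4)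
    (hi : i = ((bi : ℕ) : ZMod (4*k+1))) (hj : j = ((bj : ℕ) : ZMod (4*k+1))) :
    ¬ MutuallyMaximallyDistant (GP (4*k+1) 2) (Sum.inr i) (Sum.inr j) := by
  intro hm
  have hc := gp_connected (n := 4*k+1) (by omega)
  have hm2 := mmd_of_iso (gpRot (-i)) hc hm
  simp only [gpRot_inr] at hm2
  rw [add_neg_cancel] at hm2
  have he : j + -i = (((bj - bi : ℕ)) : ZMod (4*k+1)) := by
    rw [hi, hj, cast_sub_eq hk bj bi (by omega)]
  rw [he] at hm2
  rcases Nat.even_or_odd (bj - bi) with ⟨t, ht⟩ | ⟨t, ht⟩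
  · have ht' : bj - bi = 2*t := by omega
    rw [ht'] at hm2
    exact notMMD_vv_even hk (by omega) (by omega) hm2
  · rw [ht] at hm2
    exact notMMD_vv_odd hk (by omega) hm2

lemma notMMD_uv_pair {i j : ZMod (4*k+1)} (ai b : ℕ) (h1 : ai ≤ k-1) (h2 : b ≤ 2*k-4)
    (hi : i = ((2*ai : ℕ) : ZMod (4*k+1))) (hj : j = ((b : ℕ) : ZMod (4*k+1))) :
    ¬ MutuallyMaximallyDistant (GP (4*k+1) 2) (Sum.inl i) (Sum.inr j) := by
  intro hm
  have hc := gp_connected (n := 4*k+1) (by omega)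
  have hm2 := mmd_of_iso (gpRot (-i)) hc hm
  simp only [gpRot_inl, gpRot_inr] at hm2
  rw [add_neg_cancel] at hm2
  rcases le_or_gt (2*ai) b with hba | hba
  · -- j - i has value b - 2*ai ∈ [0, 2k-4]
    have he : j + -i = (((b - 2*ai : ℕ)) : ZMod (4*k+1)) := by
      rw [hi, hj, cast_sub_eq hk b (2*ai) hba]
    rw [he] at hm2
    rcases Nat.even_or_odd (b - 2*ai) with ⟨t, ht⟩ | ⟨t, ht⟩
    · have ht' : b - 2*ai = 2*t := by omega
      rw [ht'] at hm2
      exact notMMD_uv_even hk (by omega) hm2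
    · rw [ht] at hm2
      exact notMMD_uv_odd hk (by omega) hm2
  · -- reflect: value 2*ai - b ∈ [1, 2k-2]
    have hm3 := mmd_of_iso (gpRefl (n := 4*k+1)) hc hm2
    simp only [gpRefl_inl, gpRefl_inr] at hm3
    rw [neg_zero] at hm3
    have he : -(j + -i) = (((2*ai - b : ℕ)) : ZMod (4*k+1)) := by
      rw [hi, hj, neg_add, neg_neg]
      have := cast_sub_eq hk (2*ai) b (by omega)
      linear_combination this
    rw [he] at hm3
    rcases Nat.even_or_odd (2*ai - b) with ⟨t, ht⟩ | ⟨t, ht⟩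
    · have ht' : 2*ai - b = 2*t := by omega
      rw [ht'] at hm3
      exact notMMD_uv_even hk (by omega) hm3
    · rw [ht] at hm3
      exact notMMD_uv_odd hk (by omega) hm3

/-- the strong resolving cover set -/
def coverSet (k : ℕ) : Finset (ZMod (4*k+1) ⊕ ZMod (4*k+1)) :=
  ((Finset.range k).image
      (fun m => (Sum.inl ((2*m+1 : ℕ) : ZMod (4*k+1)) : ZMod (4*k+1) ⊕ ZMod (4*k+1)))) ∪
  ((Finset.range (2*k+1)).image
      (fun m => (Sum.inl ((2*k+m : ℕ) : ZMod (4*k+1)) : ZMod (4*k+1) ⊕ ZMod (4*k+1)))) ∪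
  ((Finset.range (2*k+4)).image
      (fun m => (Sum.inr ((2*k-3+m : ℕ) : ZMod (4*k+1)) : ZMod (4*k+1) ⊕ ZMod (4*k+1))))

lemma coverSet_card : (coverSet k).card ≤ 5*k+5 := by
  unfold coverSet
  refine le_trans (Finset.card_union_le _ _) ?_
  refine le_trans (Nat.add_le_add_right (Finset.card_union_le _ _) _) ?_
  refine le_trans (Nat.add_le_add (Nat.add_le_add Finset.card_image_le Finset.card_image_le)
    Finset.card_image_le) ?_
  simp only [Finset.card_range]
  omega

lemma self_cast (i : ZMod (4*k+1)) : ((i.val : ℕ) : ZMod (4*k+1)) = i := by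
  haveI : NeZero (4*k+1) := ⟨by omega⟩
  rw [ZMod.natCast_val, ZMod.cast_id]

lemma not_mem_inl {i : ZMod (4*k+1)} (h : Sum.inl i ∉ coverSet k) :
    ∃ a, a ≤ k-1 ∧ i.val = 2*a := by
  haveI : NeZero (4*k+1) := ⟨by omega⟩
  have hvlt : i.val < 4*k+1 := ZMod.val_lt i
  by_contra hcon
  push_neg at hcon
  apply h
  unfold coverSet
  rcases Nat.even_or_odd i.val with ⟨a, ha⟩ | ⟨a, ha⟩
  · -- even: must be ≥ 2k (else hcon violated with a ≤ k-1)
    have h2k : 2*k ≤ i.val := by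
      by_contra hlt
      push_neg at hlt
      exact hcon a (by omega) (by omega)
    refine Finset.mem_union_left _ (Finset.mem_union_right _ (Finset.mem_image.mpr
      ⟨i.val - 2*k, Finset.mem_range.mpr (by omega), ?_⟩))
    have : 2*k + (i.val - 2*k) = i.val := by omega
    rw [this, self_cast hk]
  · rcases Nat.lt_or_ge i.val (2*k) with hlt | hge
    · refine Finset.mem_union_left _ (Finset.mem_union_left _ (Finset.mem_image.mpr
        ⟨a, Finset.mem_range.mpr (by omega), ?_⟩))
      have : 2*a+1 = i.val := by omega
      rw [this, self_cast hk]
    · refine Finset.mem_union_left _ (Finset.mem_union_right _ (Finset.mem_image.mpr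
        ⟨i.val - 2*k, Finset.mem_range.mpr (by omega), ?_⟩))
      have : 2*k + (i.val - 2*k) = i.val := by omega
      rw [this, self_cast hk]

lemma not_mem_inr {i : ZMod (4*k+1)} (h : Sum.inr i ∉ coverSet k) : i.val ≤ 2*k-4 := by
  haveI : NeZero (4*k+1) := ⟨by omega⟩
  have hvlt : i.val < 4*k+1 := ZMod.val_lt i
  by_contra hcon
  push_neg at hcon
  apply h
  unfold coverSet
  refine Finset.mem_union_right _ (Finset.mem_image.mpr
    ⟨i.val - (2*k-3), Finset.mem_range.mpr (by omega), ?_⟩)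
  have : 2*k-3 + (i.val - (2*k-3)) = i.val := by omega
  rw [this, self_cast hk]

lemma gp_cover : ∀ a b, MutuallyMaximallyDistant (GP (4*k+1) 2) a b →
    a ∈ (coverSet k : Set (ZMod (4*k+1) ⊕ ZMod (4*k+1))) ∨ b ∈ (coverSet k : Set _) := by
  haveI : NeZero (4*k+1) := ⟨by omega⟩
  intro a b hm
  by_contra hn
  push_neg at hn
  obtain ⟨ha, hb⟩ := hn
  rw [Finset.mem_coe] at ha hb
  rcases a with i | i <;> rcases b with j | j
  · obtain ⟨ai, hai, hia⟩ := not_mem_inl hk ha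
    obtain ⟨aj, haj, hja⟩ := not_mem_inl hk hb
    have hi : i = ((2*ai : ℕ) : ZMod (4*k+1)) := by rw [← hia, self_cast hk]
    have hj : j = ((2*aj : ℕ) : ZMod (4*k+1)) := by rw [← hja, self_cast hk]
    rcases lt_trichotomy ai aj with h | h | h
    · exact notMMD_uu_pair hk ai aj h haj hi hj hm
    · exact hm.1 (by rw [hi, hj, h])
    · exact notMMD_uu_pair hk aj ai h hai hj hi (mmd_symm hm)
  · obtain ⟨ai, hai, hia⟩ := not_mem_inl hk ha
    have hjb := not_mem_inr hk hb
    have hi : i = ((2*ai : ℕ) : ZMod (4*k+1)) := by rw [← hia, self_cast hk]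
    have hj : j = ((j.val : ℕ) : ZMod (4*k+1)) := (self_cast hk j).symm
    exact notMMD_uv_pair hk ai j.val hai hjb hi hj hm
  · obtain ⟨aj, haj, hja⟩ := not_mem_inl hk hb
    have hib := not_mem_inr hk ha
    have hj : j = ((2*aj : ℕ) : ZMod (4*k+1)) := by rw [← hja, self_cast hk]
    have hi : i = ((i.val : ℕ) : ZMod (4*k+1)) := (self_cast hk i).symm
    exact notMMD_uv_pair hk aj i.val haj hib hj hi (mmd_symm hm)
  · have hib := not_mem_inr hk ha
    have hjb := not_mem_inr hk hb
    have hi : i = ((i.val : ℕ) : ZMod (4*k+1)) := (self_cast hk i).symm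
    have hj : j = ((j.val : ℕ) : ZMod (4*k+1)) := (self_cast hk j).symm
    rcases lt_trichotomy i.val j.val with h | h | h
    · exact notMMD_vv_pair hk i.val j.val h hjb hi hj hm
    · exact hm.1 (by rw [hi, hj, h])
    · exact notMMD_vv_pair hk j.val i.val h hib hj hi (mmd_symm hm)

end Assemble

/-- For `k ≥ 3`, `sdim (GP (4k+1) 2) ≤ 5k+5`. -/
theorem stmt_15 (k : ℕ) (hk : 3 ≤ k) : sdim (GP (4*k+1) 2) ≤ 5*k + 5 := by
  haveI : NeZero (4*k+1) := ⟨by omega⟩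
  have hc := gp_connected (n := 4*k+1) (by omega)
  have hsrs := cover_strong_resolving hc
    (coverSet k : Set (ZMod (4*k+1) ⊕ ZMod (4*k+1))) (gp_cover hk)
  have hmem : ((coverSet k : Set (ZMod (4*k+1) ⊕ ZMod (4*k+1)))).ncard ∈
      {m : ℕ | ∃ S : Set (ZMod (4*k+1) ⊕ ZMod (4*k+1)),
        IsStrongResolvingSet (GP (4*k+1) 2) S ∧ S.ncard = m} := ⟨_, hsrs, rfl⟩
  have h1 := Nat.sInf_le hmem
  rw [Set.ncard_coe_finset] at h1
  exact le_trans h1 (coverSet_card hk)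
end

section
/- The strong metric dimension of the Petersen graph GP(5,2) equals 8, with {u_0,u_1,u_2,u_3,v_0,v_1,v_2,v_3} being a strong metric basis. -/
instance : DecidableRel (GP 5 2).Adj := fun x y =>
  match x, y with
  | Sum.inl i, Sum.inl j => inferInstanceAs (Decidable (i ≠ j ∧ (j = i + 1 ∨ i = j + 1)))
  | Sum.inl i, Sum.inr j => inferInstanceAs (Decidable (i = j))
  | Sum.inr i, Sum.inl j => inferInstanceAs (Decidable (i = j))
  | Sum.inr i, Sum.inr j =>
      inferInstanceAs (Decidable (i ≠ j ∧ (j = i + ((2:ℕ) : ZMod 5) ∨ i = j + ((2:ℕ) : ZMod 5))))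

lemma common : ∀ u v : ZMod 5 ⊕ ZMod 5, u ≠ v → ¬ (GP 5 2).Adj u v →
    ∃ w, (GP 5 2).Adj u w ∧ (GP 5 2).Adj w v := by decide

lemma tri : ∀ a b c : ZMod 5 ⊕ ZMod 5,
    (GP 5 2).Adj a b → (GP 5 2).Adj a c → (GP 5 2).Adj b c → False := by decide

def dP (u v : ZMod 5 ⊕ ZMod 5) : ℕ := if u = v then 0 else if (GP 5 2).Adj u v then 1 else 2

lemma dist_eq : ∀ u v : ZMod 5 ⊕ ZMod 5, (GP 5 2).dist u v = dP u v := by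
  intro u v
  unfold dP
  split
  · subst ‹u = v›; simp
  · rename_i hne
    split
    · rename_i ha; exact (SimpleGraph.dist_eq_one_iff_adj).2 ha
    · rename_i hna
      obtain ⟨w, h1, h2⟩ := common u v hne hna
      have hle : (GP 5 2).dist u v ≤ 2 := by
        have := SimpleGraph.dist_le (h1.toWalk.append h2.toWalk)
        simpa using this
      have hreach : (GP 5 2).Reachable u v := ⟨h1.toWalk.append h2.toWalk⟩
      have h0 : (GP 5 2).dist u v ≠ 0 := by
        simp [SimpleGraph.dist_eq_zero_iff_eq_or_not_reachable, hne, hreach]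
      have h1' : (GP 5 2).dist u v ≠ 1 := fun h => hna (SimpleGraph.dist_eq_one_iff_adj.1 h)
      omega

lemma dP_le (u v : ZMod 5 ⊕ ZMod 5) : dP u v ≤ 2 := by unfold dP; split_ifs <;> omega

lemma dP_zero {u v : ZMod 5 ⊕ ZMod 5} (h : dP u v = 0) : u = v := by
  by_contra hne; unfold dP at h; split_ifs at h <;> simp_all

lemma dP_two {u v : ZMod 5 ⊕ ZMod 5} (hne : u ≠ v) (hna : ¬ (GP 5 2).Adj u v) :
    dP u v = 2 := by unfold dP; split_ifs <;> simp_all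

/-- `sdim (GP 5 2) = 8`, and `{u₀,u₁,u₂,u₃,v₀,v₁,v₂,v₃}` is a strong metric basis
(a strong resolving set of minimum cardinality 8). -/
theorem stmt_16 :
    sdim (GP 5 2) = 8 ∧
    IsStrongResolvingSet (GP 5 2)
      {Sum.inl 0, Sum.inl 1, Sum.inl 2, Sum.inl 3, Sum.inr 0, Sum.inr 1, Sum.inr 2, Sum.inr 3} ∧
    ({Sum.inl 0, Sum.inl 1, Sum.inl 2, Sum.inl 3, Sum.inr 0, Sum.inr 1, Sum.inr 2, Sum.inr 3} :
      Set (ZMod 5 ⊕ ZMod 5)).ncard = 8 := by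
  have hsrs : IsStrongResolvingSet (GP 5 2)
      {Sum.inl 0, Sum.inl 1, Sum.inl 2, Sum.inl 3, Sum.inr 0, Sum.inr 1, Sum.inr 2, Sum.inr 3} := by
    simp only [IsStrongResolvingSet, StronglyResolves, dist_eq, Set.mem_insert_iff,
      Set.mem_singleton_iff]
    decide
  have hcard : ({Sum.inl 0, Sum.inl 1, Sum.inl 2, Sum.inl 3, Sum.inr 0, Sum.inr 1, Sum.inr 2,
      Sum.inr 3} : Set (ZMod 5 ⊕ ZMod 5)).ncard = 8 := by
    rw [show ({Sum.inl 0, Sum.inl 1, Sum.inl 2, Sum.inl 3, Sum.inr 0, Sum.inr 1, Sum.inr 2,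
      Sum.inr 3} : Set (ZMod 5 ⊕ ZMod 5)) = (↑({Sum.inl 0, Sum.inl 1, Sum.inl 2, Sum.inl 3,
      Sum.inr 0, Sum.inr 1, Sum.inr 2, Sum.inr 3} : Finset (ZMod 5 ⊕ ZMod 5))) from by simp,
      Set.ncard_coe_finset]
    decide
  refine ⟨?_, hsrs, hcard⟩
  apply le_antisymm
  · exact Nat.sInf_le ⟨_, hsrs, hcard⟩
  · have hmem : (8:ℕ) ∈ {m : ℕ | ∃ S : Set (ZMod 5 ⊕ ZMod 5),
        IsStrongResolvingSet (GP 5 2) S ∧ S.ncard = m} := ⟨_, hsrs, hcard⟩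
    apply le_csInf ⟨8, hmem⟩
    rintro m ⟨S, hS, rfl⟩
    -- complement is a clique
    have hclique : ∀ u ∈ Sᶜ, ∀ v ∈ Sᶜ, u ≠ v → (GP 5 2).Adj u v := by
      intro u hu v hv hne
      by_contra hna
      obtain ⟨w, hw, hres⟩ := hS u v hne
      rw [StronglyResolves, dist_eq, dist_eq, dist_eq, dist_eq] at hres
      have hvu : dP v u = 2 := dP_two hne.symm (fun h => hna h.symm)
      have huv : dP u v = 2 := dP_two hne hna
      have l1 := dP_le w u
      have l2 := dP_le w v
      rcases hres with h | h
      · have : dP w v = 0 := by omega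
        exact hv (dP_zero this ▸ hw)
      · have : dP w u = 0 := by omega
        exact hu (dP_zero this ▸ hw)
    have hT : (Sᶜ).ncard ≤ 2 := by
      by_contra h
      push_neg at h
      rw [Set.two_lt_ncard_iff (Set.toFinite _)] at h
      obtain ⟨a, b, c, ha, hb, hc, hab, hac, hbc⟩ := h
      exact tri a b c (hclique a ha b hb hab) (hclique a ha c hc hac) (hclique b hb c hc hbc)
    have := Set.ncard_add_ncard_compl S
    have hV : Nat.card (ZMod 5 ⊕ ZMod 5) = 10 := by simp [Nat.card_eq_fintype_card]
    omega
end

section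
/- In the generalized Petersen graph GP(4k+2,2) with k ≥ 3 and odd indices i < j with j − i ≤ 2k, the vertex u_{i−1} strongly resolves the pair (u_i, u_j); in particular, u_{i−1}, u_i, v_i, v_{i+2}, …, v_j, u_j is a shortest u_{i−1}–u_j path when 4 ≤ j − i ≤ 2k. -/
def cyc (n : ℕ) (z : ZMod n) : ℕ := min z.val (n - z.val)

lemma cyc_step {n : ℕ} (hn : Even n) (h2 : 2 ≤ n) (z : ZMod n) :
    cyc n (z + 1) = cyc n z + 1 ∨ cyc n z = cyc n (z + 1) + 1 := by
  haveI : NeZero n := ⟨by omega⟩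
  have hv : z.val < n := z.val_lt
  have h1 : (1 : ZMod n).val = 1 := by
    rw [ZMod.val_one_eq_one_mod]; exact Nat.mod_eq_of_lt (by omega)
  have hadd : (z + 1).val = (z.val + 1) % n := by
    rw [ZMod.val_add, h1]
  obtain ⟨t, ht⟩ := hn
  unfold cyc
  rcases Nat.lt_or_ge (z.val + 1) n with h | h
  · rw [hadd, Nat.mod_eq_of_lt h]; omega
  · have he : z.val + 1 = n := by omega
    rw [hadd, he, Nat.mod_self]
    omega

def phiA (n : ℕ) (a : ZMod n) : ZMod n ⊕ ZMod n → ℕ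
  | Sum.inl z => min (cyc n (z - a)) ((cyc n (z - a) + 5) / 2)
  | Sum.inr z => (cyc n (z - a) + 3) / 2

lemma phiA_adj {n : ℕ} (hn : Even n) (h2 : 2 ≤ n) (a : ZMod n) {x y : ZMod n ⊕ ZMod n}
    (h : (GP n 2).Adj x y) : phiA n a x ≤ phiA n a y + 1 := by
  cases x with
  | inl z =>
    cases y with
    | inl w =>
      obtain ⟨hne, hw | hz⟩ := h
      · have e : w - a = (z - a) + 1 := by rw [hw]; ring
        have := cyc_step hn h2 (z - a)
        rw [← e] at this
        simp only [phiA]; omega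
      · have e : z - a = (w - a) + 1 := by rw [hz]; ring
        have := cyc_step hn h2 (w - a)
        rw [← e] at this
        simp only [phiA]; omega
    | inr w =>
      have e : (z : ZMod n) = w := h
      simp only [phiA, e]; omega
  | inr z =>
    cases y with
    | inl w =>
      have e : (z : ZMod n) = w := h
      simp only [phiA, e]; omega
    | inr w =>
      obtain ⟨hne, hw | hz⟩ := h
      · have e : w - a = ((z - a) + 1) + 1 := by
          rw [hw]; push_cast; ring
        have h1 := cyc_step hn h2 (z - a)
        have h2' := cyc_step hn h2 ((z - a) + 1)
        rw [← e] at h2'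
        simp only [phiA]; omega
      · have e : z - a = ((w - a) + 1) + 1 := by
          rw [hz]; push_cast; ring
        have h1 := cyc_step hn h2 (w - a)
        have h2' := cyc_step hn h2 ((w - a) + 1)
        rw [← e] at h2'
        simp only [phiA]; omega

lemma phiA_walk {n : ℕ} (hn : Even n) (h2 : 2 ≤ n) (a : ZMod n) {x y : ZMod n ⊕ ZMod n}
    (p : (GP n 2).Walk x y) : phiA n a y ≤ phiA n a x + p.length := by
  induction p with
  | nil => simp
  | cons h p ih =>
    rw [SimpleGraph.Walk.length_cons]
    have := phiA_adj hn h2 a h.symm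
    omega

lemma phiA_le_dist {n : ℕ} (hn : Even n) (h2 : 2 ≤ n) (a : ZMod n) (y : ZMod n ⊕ ZMod n)
    (hr : (GP n 2).Reachable (Sum.inl a) y) :
    phiA n a y ≤ (GP n 2).dist (Sum.inl a) y := by
  haveI : NeZero n := ⟨by omega⟩
  obtain ⟨p, hp⟩ := hr.exists_walk_length_eq_dist
  have hw := phiA_walk hn h2 a p
  have h0 : phiA n a (Sum.inl a) = 0 := by
    simp [phiA, cyc, sub_self]
  omega

lemma cyc_natCast {n m : ℕ} (h : 2 * m ≤ n) (h0 : 0 < n) : cyc n ((m : ℕ) : ZMod n) = m := by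
  unfold cyc
  rw [ZMod.val_natCast_of_lt (by omega)]
  omega

open SimpleGraph in
def innerW (n : ℕ) (h2 : (2 : ZMod n) ≠ 0) (c : ZMod n) :
    (t : ℕ) → (GP n 2).Walk (Sum.inr c) (Sum.inr (c + 2 * (t : ZMod n)))
  | 0 => Walk.nil.copy rfl (by push_cast; ring_nf)
  | t+1 =>
    (Walk.cons
      (show (GP n 2).Adj (Sum.inr c) (Sum.inr (c + 2)) from
        ⟨fun h => h2 (left_eq_add.mp h), Or.inl (by push_cast; ring)⟩)
      (innerW n h2 (c + 2) t)).copy rfl (by push_cast; ring_nf)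

lemma innerW_length (n : ℕ) (h2 : (2 : ZMod n) ≠ 0) (c : ZMod n) (t : ℕ) :
    (innerW n h2 c t).length = t := by
  induction t generalizing c with
  | zero => simp [innerW]
  | succ t ih => simp [innerW, ih]

lemma innerW_support (n : ℕ) (h2 : (2 : ZMod n) ≠ 0) (c : ZMod n) (t : ℕ) :
    (innerW n h2 c t).support
      = (List.range (t + 1)).map (fun s : ℕ => Sum.inr (c + 2 * (s : ZMod n))) := by
  induction t generalizing c with
  | zero =>
    rw [innerW, SimpleGraph.Walk.support_copy, SimpleGraph.Walk.support_nil,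
      show List.range 1 = [0] from rfl, List.map_cons, List.map_nil]
    norm_num
  | succ t ih =>
    rw [innerW, SimpleGraph.Walk.support_copy, SimpleGraph.Walk.support_cons, ih]
    conv_rhs => rw [List.range_succ_eq_map]
    rw [List.map_cons, List.map_map]
    congr 1
    · norm_num
    apply List.map_congr_left
    intro s _
    simp only [Function.comp_apply]
    congr 1
    push_cast
    ring

open SimpleGraph in
def outerW (n : ℕ) (h1 : (1 : ZMod n) ≠ 0) (c : ZMod n) :
    (t : ℕ) → (GP n 2).Walk (Sum.inl c) (Sum.inl (c + (t : ZMod n)))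
  | 0 => Walk.nil.copy rfl (by push_cast; ring_nf)
  | t+1 =>
    (Walk.cons
      (show (GP n 2).Adj (Sum.inl c) (Sum.inl (c + 1)) from
        ⟨fun h => h1 (left_eq_add.mp h), Or.inl rfl⟩)
      (outerW n h1 (c + 1) t)).copy rfl (by push_cast; ring_nf)

lemma outerW_length (n : ℕ) (h1 : (1 : ZMod n) ≠ 0) (c : ZMod n) (t : ℕ) :
    (outerW n h1 c t).length = t := by
  induction t generalizing c with
  | zero => simp [outerW]
  | succ t ih => simp [outerW, ih]

/-- In `GP (4k+2) 2` with `k ≥ 3` and odd `i < j` with `j − i ≤ 2k`, the vertex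
`u_{i−1}` strongly resolves `(uᵢ, uⱼ)`; in particular, when `4 ≤ j − i`, the walk
`u_{i−1}, uᵢ, vᵢ, v_{i+2}, …, vⱼ, uⱼ` is a shortest `u_{i−1}`–`uⱼ` path. -/
theorem stmt_18 (k i j : ℕ) (hk : 3 ≤ k) (hi : Odd i) (hj : Odd j) (hij : i < j)
    (hle : j - i ≤ 2*k) :
    StronglyResolves (GP (4*k+2) 2) (Sum.inl ((i - 1 : ℕ) : ZMod (4*k+2)))
      (Sum.inl ((i : ℕ) : ZMod (4*k+2))) (Sum.inl ((j : ℕ) : ZMod (4*k+2))) ∧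
    (4 ≤ j - i →
      ∃ p : (GP (4*k+2) 2).Walk (Sum.inl ((i - 1 : ℕ) : ZMod (4*k+2)))
          (Sum.inl ((j : ℕ) : ZMod (4*k+2))),
        p.length = (GP (4*k+2) 2).dist (Sum.inl ((i - 1 : ℕ) : ZMod (4*k+2)))
          (Sum.inl ((j : ℕ) : ZMod (4*k+2))) ∧
        p.support = [Sum.inl ((i - 1 : ℕ) : ZMod (4*k+2)), Sum.inl ((i : ℕ) : ZMod (4*k+2))] ++
          ((List.range ((j - i)/2 + 1)).map
            (fun t => Sum.inr ((i + 2*t : ℕ) : ZMod (4*k+2)))) ++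
          [Sum.inl ((j : ℕ) : ZMod (4*k+2))]) := by
  obtain ⟨a, ha⟩ := hi
  obtain ⟨b, hb⟩ := hj
  have hev : Even (4*k+2) := ⟨2*k+1, by ring⟩
  have h2n : 2 ≤ 4*k+2 := by omega
  haveI : NeZero (4*k+2) := ⟨by omega⟩
  have h1ne : (1 : ZMod (4*k+2)) ≠ 0 := by
    intro h
    have h' := congrArg ZMod.val h
    rw [ZMod.val_one_eq_one_mod, ZMod.val_zero, Nat.mod_eq_of_lt (by omega)] at h'
    omega
  have h2ne : (2 : ZMod (4*k+2)) ≠ 0 := by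
    intro h
    have h' : (((2:ℕ)) : ZMod (4*k+2)).val = 0 := by
      rw [show (((2:ℕ)) : ZMod (4*k+2)) = (2 : ZMod (4*k+2)) by push_cast; rfl, h,
        ZMod.val_zero]
    rw [ZMod.val_natCast_of_lt (by omega)] at h'
    omega
  -- adjacency u_{i-1} ~ u_i
  have cA : ((i:ℕ) : ZMod (4*k+2)) = ((i-1:ℕ) : ZMod (4*k+2)) + 1 := by
    rw [show (i:ℕ) = (i-1)+1 by omega]; push_cast; ring
  have adj_wu : (GP (4*k+2) 2).Adj (Sum.inl ((i-1:ℕ) : ZMod (4*k+2)))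
      (Sum.inl ((i:ℕ) : ZMod (4*k+2))) := by
    refine ⟨?_, Or.inl cA⟩
    intro h
    rw [cA] at h
    exact h1ne (left_eq_add.mp h)
  have adj_si : (GP (4*k+2) 2).Adj (Sum.inl ((i:ℕ) : ZMod (4*k+2)))
      (Sum.inr ((i:ℕ) : ZMod (4*k+2))) := rfl
  have adj_sj : (GP (4*k+2) 2).Adj (Sum.inr ((j:ℕ) : ZMod (4*k+2)))
      (Sum.inl ((j:ℕ) : ZMod (4*k+2))) := rfl
  -- the inner walk
  have ecast : ((i:ℕ) : ZMod (4*k+2)) + 2 * (((j-i)/2 : ℕ) : ZMod (4*k+2))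
      = ((j:ℕ) : ZMod (4*k+2)) := by
    have hj2 : (j:ℕ) = i + 2*((j-i)/2) := by omega
    conv_rhs => rw [hj2]
    push_cast; ring
  set W0 : (GP (4*k+2) 2).Walk (Sum.inr ((i:ℕ) : ZMod (4*k+2)))
      (Sum.inr ((j:ℕ) : ZMod (4*k+2))) :=
    (innerW (4*k+2) h2ne ((i:ℕ) : ZMod (4*k+2)) ((j-i)/2)).copy rfl
      (congrArg Sum.inr ecast) with hW0
  set Wuv : (GP (4*k+2) 2).Walk (Sum.inl ((i:ℕ) : ZMod (4*k+2)))
      (Sum.inl ((j:ℕ) : ZMod (4*k+2))) :=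
    (SimpleGraph.Walk.cons adj_si W0).concat adj_sj with hWuv
  set Wwv : (GP (4*k+2) 2).Walk (Sum.inl ((i-1:ℕ) : ZMod (4*k+2)))
      (Sum.inl ((j:ℕ) : ZMod (4*k+2))) :=
    SimpleGraph.Walk.cons adj_wu Wuv with hWwv
  have hWuv_len : Wuv.length = (j-i)/2 + 2 := by
    rw [hWuv, SimpleGraph.Walk.length_concat, SimpleGraph.Walk.length_cons, hW0,
      SimpleGraph.Walk.length_copy, innerW_length]
  have hWwv_len : Wwv.length = (j-i)/2 + 3 := by
    rw [hWwv, SimpleGraph.Walk.length_cons, hWuv_len]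
  -- lower bounds
  have hcyc_uv : cyc (4*k+2) (((j:ℕ) : ZMod (4*k+2)) - ((i:ℕ) : ZMod (4*k+2))) = j - i := by
    rw [← Nat.cast_sub hij.le]
    exact cyc_natCast (by omega) (by omega)
  have hcyc_wv : cyc (4*k+2) (((j:ℕ) : ZMod (4*k+2)) - ((i-1:ℕ) : ZMod (4*k+2))) = j - i + 1 := by
    rw [← Nat.cast_sub (by omega : i - 1 ≤ j), show j - (i-1) = j - i + 1 by omega]
    exact cyc_natCast (by omega) (by omega)
  have hlow_uv : min (j-i) ((j-i+5)/2) ≤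
      (GP (4*k+2) 2).dist (Sum.inl ((i:ℕ) : ZMod (4*k+2))) (Sum.inl ((j:ℕ) : ZMod (4*k+2))) := by
    have := phiA_le_dist hev h2n ((i:ℕ) : ZMod (4*k+2)) (Sum.inl ((j:ℕ) : ZMod (4*k+2)))
      Wuv.reachable
    simpa [phiA, hcyc_uv] using this
  have hlow_wv : min (j-i+1) ((j-i+6)/2) ≤
      (GP (4*k+2) 2).dist (Sum.inl ((i-1:ℕ) : ZMod (4*k+2)))
        (Sum.inl ((j:ℕ) : ZMod (4*k+2))) := by
    have := phiA_le_dist hev h2n ((i-1:ℕ) : ZMod (4*k+2)) (Sum.inl ((j:ℕ) : ZMod (4*k+2)))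
      Wwv.reachable
    simpa [phiA, hcyc_wv, show j - i + 1 + 5 = j - i + 6 by omega] using this
  -- exact distances
  have huv : (GP (4*k+2) 2).dist (Sum.inl ((i:ℕ) : ZMod (4*k+2)))
      (Sum.inl ((j:ℕ) : ZMod (4*k+2))) = min (j-i) ((j-i+5)/2) := by
    refine le_antisymm ?_ hlow_uv
    rcases Nat.lt_or_ge (j-i) 4 with hd | hd
    · -- j - i = 2, use the outer walk of length 2
      have e2 : ((i:ℕ) : ZMod (4*k+2)) + (((2:ℕ)) : ZMod (4*k+2))
          = ((j:ℕ) : ZMod (4*k+2)) := by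
        rw [show (j:ℕ) = i + 2 by omega]; push_cast; ring
      have hdle := (GP (4*k+2) 2).dist_le
        ((outerW (4*k+2) h1ne ((i:ℕ) : ZMod (4*k+2)) 2).copy rfl (congrArg Sum.inl e2))
      rw [SimpleGraph.Walk.length_copy, outerW_length] at hdle
      omega
    · have hdle := (GP (4*k+2) 2).dist_le Wuv
      rw [hWuv_len] at hdle
      omega
  have hwv : (GP (4*k+2) 2).dist (Sum.inl ((i-1:ℕ) : ZMod (4*k+2)))
      (Sum.inl ((j:ℕ) : ZMod (4*k+2))) = min (j-i+1) ((j-i+6)/2) := by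
    refine le_antisymm ?_ hlow_wv
    rcases Nat.lt_or_ge (j-i) 4 with hd | hd
    · have e3 : ((i-1:ℕ) : ZMod (4*k+2)) + (((3:ℕ)) : ZMod (4*k+2))
          = ((j:ℕ) : ZMod (4*k+2)) := by
        rw [show (j:ℕ) = (i-1) + 3 by omega]; push_cast; ring
      have hdle := (GP (4*k+2) 2).dist_le
        ((outerW (4*k+2) h1ne ((i-1:ℕ) : ZMod (4*k+2)) 3).copy rfl (congrArg Sum.inl e3))
      rw [SimpleGraph.Walk.length_copy, outerW_length] at hdle
      omega
    · have hdle := (GP (4*k+2) 2).dist_le Wwv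
      rw [hWwv_len] at hdle
      omega
  have hwu : (GP (4*k+2) 2).dist (Sum.inl ((i-1:ℕ) : ZMod (4*k+2)))
      (Sum.inl ((i:ℕ) : ZMod (4*k+2))) = 1 :=
    SimpleGraph.dist_eq_one_iff_adj.mpr adj_wu
  constructor
  · right
    rw [hwv, hwu, huv]
    omega
  · intro h4
    refine ⟨Wwv, ?_, ?_⟩
    · rw [hWwv_len, hwv]
      omega
    · rw [hWwv, SimpleGraph.Walk.support_cons, hWuv, SimpleGraph.Walk.support_concat,
        SimpleGraph.Walk.support_cons, hW0, SimpleGraph.Walk.support_copy, innerW_support]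
      rw [show (fun t : ℕ => (Sum.inr ((i + 2*t : ℕ) : ZMod (4*k+2)) : ZMod (4*k+2) ⊕ ZMod (4*k+2)))
          = (fun s : ℕ => Sum.inr (((i:ℕ) : ZMod (4*k+2)) + 2 * (s : ZMod (4*k+2)))) from
        funext fun s => by push_cast; ring_nf]
      simp [List.concat_eq_append]
end
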